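/- Let A be a C*-algebra and e ∈ M(A) a projection in its multiplier algebra. If J is a closed essential right ideal of the corner C*-algebra eAe, then the closure of JA + (1-e)A is a closed essential right ideal of A. -/

import Mathlib

/-- Let `A` be a C*-algebra and `e ∈ M(A)` a projection in its multiplier
algebra.  We encode this by taking a unital C*-algebra `B` (playing the role of `M(A)`),
`A ⊆ B` a closed two-sided (star-closed) ideal, and `e ∈ B` with `e = e* = e²`.
If `J` is a closed essential right ideal of the corner C*-algebra `eAe`, then the
closure of `J·A + (1-e)·A` is a closed essential right ideal of `A`.
(A right ideal is essential iff its left annihilator is zero.) -/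
theorem stmt0 {B : Type*} [CStarAlgebra B] (A : Set B)
    (hA_closed : IsClosed A) (hA_zero : (0 : B) ∈ A)
    (hA_add : ∀ x ∈ A, ∀ y ∈ A, x + y ∈ A)
    (hA_smul : ∀ (c : ℂ), ∀ x ∈ A, c • x ∈ A)
    (hA_star : ∀ x ∈ A, star x ∈ A)
    (hA_left : ∀ x ∈ A, ∀ b : B, b * x ∈ A)
    (hA_right : ∀ x ∈ A, ∀ b : B, x * b ∈ A)
    (e : B) (he_idem : e * e = e) (he_star : star e = e)
    (J : Set B) (hJ_sub : J ⊆ {y | ∃ a ∈ A, y = e * a * e})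
    (hJ_closed : IsClosed J) (hJ_zero : (0 : B) ∈ J)
    (hJ_add : ∀ x ∈ J, ∀ y ∈ J, x + y ∈ J)
    (hJ_smul : ∀ (c : ℂ), ∀ x ∈ J, c • x ∈ J)
    (hJ_mul : ∀ x ∈ J, ∀ a ∈ A, x * (e * a * e) ∈ J)
    (hJ_ess : ∀ z, (∃ a ∈ A, z = e * a * e) → z ≠ 0 → ∃ x ∈ J, z * x ≠ 0) :
    (closure {y | ∃ j ∈ J, ∃ a ∈ A, ∃ c ∈ A, y = j * a + (c - e * c)}) ⊆ A ∧
    IsClosed (closure {y | ∃ j ∈ J, ∃ a ∈ A, ∃ c ∈ A, y = j * a + (c - e * c)}) ∧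
    (0 : B) ∈ closure {y | ∃ j ∈ J, ∃ a ∈ A, ∃ c ∈ A, y = j * a + (c - e * c)} ∧
    (∀ x ∈ closure {y | ∃ j ∈ J, ∃ a ∈ A, ∃ c ∈ A, y = j * a + (c - e * c)},
      ∀ y ∈ closure {y | ∃ j ∈ J, ∃ a ∈ A, ∃ c ∈ A, y = j * a + (c - e * c)},
        x + y ∈ closure {y | ∃ j ∈ J, ∃ a ∈ A, ∃ c ∈ A, y = j * a + (c - e * c)}) ∧
    (∀ (c : ℂ), ∀ x ∈ closure {y | ∃ j ∈ J, ∃ a ∈ A, ∃ c ∈ A, y = j * a + (c - e * c)},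
        c • x ∈ closure {y | ∃ j ∈ J, ∃ a ∈ A, ∃ c ∈ A, y = j * a + (c - e * c)}) ∧
    (∀ x ∈ closure {y | ∃ j ∈ J, ∃ a ∈ A, ∃ c ∈ A, y = j * a + (c - e * c)}, ∀ a ∈ A,
        x * a ∈ closure {y | ∃ j ∈ J, ∃ a ∈ A, ∃ c ∈ A, y = j * a + (c - e * c)}) ∧
    (∀ z ∈ A, z ≠ 0 →
      ∃ x ∈ closure {y | ∃ j ∈ J, ∃ a ∈ A, ∃ c ∈ A, y = j * a + (c - e * c)}, z * x ≠ 0) := by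
  classical
  letI : PartialOrder B := CStarAlgebra.spectralOrder B
  letI : StarOrderedRing B := CStarAlgebra.spectralOrderedRing B
  set S : Set B := {y | ∃ j ∈ J, ∃ a ∈ A, ∃ c ∈ A, y = j * a + (c - e * c)} with hS_def
  -- basic helpers
  have hA_sub : ∀ x ∈ A, ∀ y ∈ A, x - y ∈ A := by
    intro x hx y hy
    have := hA_add x hx _ (hA_smul (-1) y hy)
    simpa [neg_one_smul, sub_eq_add_neg] using this
  have hA_smulR : ∀ (r : ℝ), ∀ x ∈ A, r • x ∈ A := by
    intro r x hx
    have := hA_smul (r : ℂ) x hx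
    rwa [Complex.coe_smul] at this
  have hJ_smulR : ∀ (r : ℝ), ∀ x ∈ J, r • x ∈ J := by
    intro r x hx
    have := hJ_smul (r : ℂ) x hx
    rwa [Complex.coe_smul] at this
  have hJ_sub2 : ∀ x ∈ J, ∀ y ∈ J, x - y ∈ J := by
    intro x hx y hy
    have := hJ_add x hx _ (hJ_smul (-1) y hy)
    simpa [neg_one_smul, sub_eq_add_neg] using this
  have hJ_A : ∀ x ∈ J, x ∈ A := by
    intro x hx
    obtain ⟨a, ha, rfl⟩ := hJ_sub hx
    exact hA_right _ (hA_left a ha e) e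
  have hJ_e : ∀ x ∈ J, e * x = x ∧ x * e = x := by
    intro x hx
    obtain ⟨a, ha, rfl⟩ := hJ_sub hx
    constructor
    · rw [← mul_assoc, ← mul_assoc, he_idem]
    · rw [mul_assoc, he_idem]
  have hJ_mul_star_self : ∀ x ∈ J, x * star x ∈ J := by
    intro x hx
    obtain ⟨a, ha, hxe⟩ := hJ_sub hx
    have h1 : star x = e * star a * e := by
      rw [hxe]; simp [star_mul, he_star, mul_assoc]
    have := hJ_mul x hx (star a) (hA_star a ha)
    rwa [← h1] at this
  -- the key fact: J·A + J·A + (1-e)·A ⊆ closure S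
  have key2 : ∀ j1 ∈ J, ∀ a1 ∈ A, ∀ j2 ∈ J, ∀ a2 ∈ A, ∀ c ∈ A,
      j1 * a1 + j2 * a2 + (c - e * c) ∈ closure S := by
    intro j1 hj1 a1 ha1 j2 hj2 a2 ha2 c hc
    have hj1A := hJ_A j1 hj1
    have hj2A := hJ_A j2 hj2
    set h : B := j1 * star j1 + j2 * star j2 with hh_def
    have hhJ : h ∈ J := hJ_add _ (hJ_mul_star_self j1 hj1) _ (hJ_mul_star_self j2 hj2)
    have hhA : h ∈ A := hJ_A _ hhJ
    have hh_nn : (0 : B) ≤ h := add_nonneg (mul_star_self_nonneg j1) (mul_star_self_nonneg j2)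
    have hh_sa : IsSelfAdjoint h := IsSelfAdjoint.of_nonneg hh_nn
    have hhe : h * e = h := (hJ_e h hhJ).2
    have heh : e * h = h := (hJ_e h hhJ).1
    have hle1 : j1 * star j1 ≤ h := le_add_of_nonneg_right (mul_star_self_nonneg j2)
    have hle2 : j2 * star j2 ≤ h := le_add_of_nonneg_left (mul_star_self_nonneg j1)
    clear_value h
    set f : ℕ → ℝ → ℝ := fun n t => (n * t) / (1 + n * |t|) with hf_def
    have hf_cont : ∀ n, Continuous (f n) := by
      intro n
      apply Continuous.div (by fun_prop) (by fun_prop)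
      intro t
      positivity
    set u : ℕ → B := fun n => cfc (f n) h with hu_def
    have hu_sa : ∀ n, IsSelfAdjoint (u n) := fun n => cfc_predicate (f n) h
    have hspec : ∀ t ∈ spectrum ℝ h, 0 ≤ t := fun t ht => spectrum_nonneg_of_nonneg hh_nn ht
    have hu_eq : ∀ n, u n = (n : ℝ) • h - (n : ℝ) • (h * u n) := by
      intro n
      have hc2 : Continuous fun t : ℝ => (n : ℝ) * (t * f n t) :=
        continuous_const.mul (continuous_id.mul (hf_cont n))
      have step : cfc (fun t => (n : ℝ) * t - (n : ℝ) * (t * f n t)) h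
          = (n : ℝ) • h - (n : ℝ) • (h * u n) := by
        rw [cfc_sub (fun t => (n : ℝ) * t) (fun t => (n : ℝ) * (t * f n t)) h
            (by fun_prop) hc2.continuousOn,
          cfc_const_mul (n : ℝ) (fun t : ℝ => t) h (by fun_prop),
          cfc_const_mul (n : ℝ) (fun t => t * f n t) h
            (continuous_id.mul (hf_cont n)).continuousOn,
          cfc_mul (fun t : ℝ => t) (f n) h (by fun_prop) (hf_cont n).continuousOn,
          cfc_id' ℝ h]
      have congr1 : cfc (fun t => (n : ℝ) * t - (n : ℝ) * (t * f n t)) h = cfc (f n) h := by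
        apply cfc_congr
        intro t ht
        have htnn := hspec t ht
        have hpos : (0 : ℝ) < 1 + n * t := by positivity
        simp only [hf_def, abs_of_nonneg htnn]
        field_simp
        ring
      calc u n = cfc (fun t => (n : ℝ) * t - (n : ℝ) * (t * f n t)) h := congr1.symm
        _ = (n : ℝ) • h - (n : ℝ) • (h * u n) := step
    have hu_A : ∀ n, u n ∈ A := by
      intro n
      rw [hu_eq n]
      exact hA_sub _ (hA_smulR _ _ hhA) _ (hA_smulR _ _ (hA_right _ hhA (u n)))
    have hunit : ∀ n : ℕ, IsUnit (1 + (n : ℝ) • h) := by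
      intro n
      refine CStarAlgebra.isUnit_of_le (1 : B) ?_ isStrictlyPositive_one
      exact le_add_of_nonneg_right (smul_nonneg (by positivity) hh_nn)
    have hu_sum : ∀ n, u n + (n : ℝ) • (h * u n) = (n : ℝ) • h := by
      intro n
      nth_rewrite 1 [hu_eq n]
      abel
    have hue : ∀ n, e * u n * e = u n := by
      intro n
      have key1 : (1 + (n : ℝ) • h) * u n = (n : ℝ) • h := by
        rw [add_mul, one_mul, smul_mul_assoc]
        exact hu_sum n
      have key2' : (1 + (n : ℝ) • h) * (e * u n * e) = (n : ℝ) • h := by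
        have expand : (1 + (n : ℝ) • h) * (e * u n * e)
            = e * u n * e + (n : ℝ) • (h * u n * e) := by
          rw [add_mul, one_mul, smul_mul_assoc]
          congr 1
          rw [← mul_assoc, ← mul_assoc, hhe]
        have collect : e * u n * e + (n : ℝ) • (h * u n * e)
            = e * (u n + (n : ℝ) • (h * u n)) * e := by
          rw [mul_add, add_mul]
          congr 1
          rw [mul_smul_comm, smul_mul_assoc]
          congr 1
          rw [← mul_assoc, heh]
        rw [expand, collect, hu_sum n, mul_smul_comm, smul_mul_assoc, heh, hhe]
      exact ((hunit n).mul_left_cancel (key2'.trans key1.symm))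
    have hu_J : ∀ n, u n ∈ J := by
      intro n
      have h1 : h * u n ∈ J := by
        have := hJ_mul h hhJ (u n) (hu_A n)
        rwa [hue n] at this
      rw [hu_eq n]
      exact hJ_sub2 _ (hJ_smulR _ _ hhJ) _ (hJ_smulR _ _ h1)
    -- norm estimates
    have hv_eq : ∀ n, (1 : B) - u n = cfc (fun t => 1 - f n t) h := by
      intro n
      rw [cfc_sub (fun _ : ℝ => (1 : ℝ)) (f n) h (by fun_prop) (hf_cont n).continuousOn,
        cfc_const_one ℝ h]
    have hvhv : ∀ n, ((1 : B) - u n) * h * ((1 : B) - u n)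
        = cfc (fun t => (1 - f n t) * t * (1 - f n t)) h := by
      intro n
      have hc1 : Continuous fun t : ℝ => 1 - f n t := continuous_const.sub (hf_cont n)
      rw [cfc_mul (fun t => (1 - f n t) * t) (fun t => 1 - f n t) h
          (hc1.mul continuous_id).continuousOn hc1.continuousOn,
        cfc_mul (fun t => 1 - f n t) (fun t : ℝ => t) h hc1.continuousOn (by fun_prop),
        cfc_id' ℝ h, ← hv_eq n]
    have hnorm_vhv : ∀ n : ℕ, 1 ≤ n → ‖((1 : B) - u n) * h * ((1 : B) - u n)‖ ≤ ((n : ℝ))⁻¹ := by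
      intro n hn
      have hn' : (0 : ℝ) < n := by exact_mod_cast hn
      rw [hvhv n]
      apply norm_cfc_le (by positivity)
      intro t ht
      have htnn := hspec t ht
      have hpos : (0 : ℝ) < 1 + n * t := by positivity
      have h1f : 1 - f n t = 1 / (1 + n * t) := by
        simp only [hf_def, abs_of_nonneg htnn]
        field_simp
        ring
      rw [Real.norm_eq_abs, h1f]
      have hval : 1 / (1 + n * t) * t * (1 / (1 + n * t)) = t / (1 + n * t) ^ 2 := by
        rw [eq_div_iff (by positivity), sq]
        field_simp
      rw [hval, abs_of_nonneg (by positivity), div_le_iff₀ (by positivity), inv_mul_eq_div,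
        le_div_iff₀ hn']
      nlinarith [sq_nonneg (1 - (n : ℝ) * t), sq_nonneg ((n : ℝ) * t)]
    have hbound : ∀ j, j * star j ≤ h → ∀ n : ℕ, 1 ≤ n →
        ‖u n * j - j‖ ≤ Real.sqrt ((n : ℝ))⁻¹ := by
      intro j hjh n hn
      have hv_sa : IsSelfAdjoint ((1 : B) - u n) := by
        rw [IsSelfAdjoint, star_sub, star_one, (hu_sa n).star_eq]
      have heq : u n * j - j = -(((1 : B) - u n) * j) := by noncomm_ring
      rw [heq, norm_neg]
      have hstar : (((1 : B) - u n) * j) * star (((1 : B) - u n) * j)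
          = ((1 : B) - u n) * (j * star j) * ((1 : B) - u n) := by
        rw [star_mul, hv_sa.star_eq]
        noncomm_ring
      have hle : ((1 : B) - u n) * (j * star j) * ((1 : B) - u n)
          ≤ ((1 : B) - u n) * h * ((1 : B) - u n) := by
        have := star_left_conjugate_le_conjugate hjh ((1 : B) - u n)
        rwa [hv_sa.star_eq] at this
      have hnn : (0 : B) ≤ ((1 : B) - u n) * (j * star j) * ((1 : B) - u n) := by
        have := star_left_conjugate_nonneg (mul_star_self_nonneg j) ((1 : B) - u n)
        rwa [hv_sa.star_eq] at this
      have hsq : ‖((1 : B) - u n) * j‖ * ‖((1 : B) - u n) * j‖ ≤ ((n : ℝ))⁻¹ := by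
        rw [← CStarRing.norm_self_mul_star, hstar]
        exact (CStarAlgebra.norm_le_norm_of_nonneg_of_le hnn hle).trans (hnorm_vhv n hn)
      have h0 : (0 : ℝ) ≤ ‖((1 : B) - u n) * j‖ := norm_nonneg _
      have hcn : (0 : ℝ) ≤ ((n : ℝ))⁻¹ := by positivity
      nlinarith [Real.sq_sqrt hcn, Real.sqrt_nonneg ((n : ℝ))⁻¹]
    have hsqrt_tend : Filter.Tendsto (fun n : ℕ => Real.sqrt ((n : ℝ))⁻¹)
        Filter.atTop (nhds 0) := by
      have h1 : Filter.Tendsto (fun n : ℕ => ((n : ℝ))⁻¹) Filter.atTop (nhds 0) :=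
        tendsto_inv_atTop_nhds_zero_nat
      have := (Real.continuous_sqrt.tendsto' 0 0 (by simp)).comp h1
      exact this
    have hlim : ∀ j, j * star j ≤ h → Filter.Tendsto (fun n => u n * j) Filter.atTop (nhds j) := by
      intro j hjh
      rw [tendsto_iff_norm_sub_tendsto_zero]
      refine squeeze_zero' (Filter.Eventually.of_forall fun n => norm_nonneg _) ?_ hsqrt_tend
      exact Filter.eventually_atTop.mpr ⟨1, fun n hn => hbound j hjh n hn⟩
    have htend : Filter.Tendsto (fun n => (u n * j1) * a1 + (u n * j2) * a2 + (c - e * c))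
        Filter.atTop (nhds (j1 * a1 + j2 * a2 + (c - e * c))) := by
      have t1 := (hlim j1 hle1).mul_const a1
      have t2 := (hlim j2 hle2).mul_const a2
      exact (t1.add t2).add tendsto_const_nhds
    apply mem_closure_of_tendsto htend
    filter_upwards with n
    refine ⟨u n, hu_J n, j1 * a1 + j2 * a2,
      hA_add _ (hA_right _ hj1A a1) _ (hA_right _ hj2A a2), c, hc, ?_⟩
    simp only [mul_add, mul_assoc]
  have hS_sub_cl : S ⊆ closure S := subset_closure
  have keyS : ∀ x ∈ S, ∀ y ∈ S, x + y ∈ closure S := by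
    rintro x ⟨j1, hj1, a1, ha1, c1, hc1, rfl⟩ y ⟨j2, hj2, a2, ha2, c2, hc2, rfl⟩
    have hmem := key2 j1 hj1 a1 ha1 j2 hj2 a2 ha2 (c1 + c2) (hA_add _ hc1 _ hc2)
    have heq : j1 * a1 + (c1 - e * c1) + (j2 * a2 + (c2 - e * c2))
        = j1 * a1 + j2 * a2 + ((c1 + c2) - e * (c1 + c2)) := by
      rw [mul_add]
      abel
    rw [heq]
    exact hmem
  -- the seven conjuncts
  refine ⟨?_, isClosed_closure, ?_, ?_, ?_, ?_, ?_⟩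
  · -- closure S ⊆ A
    rw [hA_closed.closure_subset_iff]
    rintro y ⟨j, hj, a, ha, c, hc, rfl⟩
    exact hA_add _ (hA_right _ (hJ_A j hj) a) _ (hA_sub c hc _ (hA_left c hc e))
  · -- 0 ∈ closure S
    exact subset_closure ⟨0, hJ_zero, 0, hA_zero, 0, hA_zero, by simp⟩
  · -- addition
    have step1 : ∀ x ∈ S, ∀ y ∈ closure S, x + y ∈ closure S := by
      intro x hx y hy
      have hmaps : Set.MapsTo (fun t => x + t) S (closure S) := fun t ht => keyS x hx t ht
      have := hmaps.closure (continuous_const.add continuous_id) hy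
      simpa [closure_closure] using this
    intro x hx y hy
    have hmaps : Set.MapsTo (fun t => t + y) S (closure S) := fun t ht => step1 t ht y hy
    have := hmaps.closure (continuous_id.add continuous_const) hx
    simpa [closure_closure] using this
  · -- scalar multiplication
    intro c x hx
    have hmaps : Set.MapsTo (fun t => c • t) S S := by
      rintro t ⟨j, hj, a, ha, d, hd, rfl⟩
      exact ⟨c • j, hJ_smul c j hj, a, ha, c • d, hA_smul c d hd, by
        simp [smul_add, smul_sub, smul_mul_assoc, mul_smul_comm]⟩
    exact hmaps.closure (continuous_const_smul c) hx
  · -- right multiplication by A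
    intro x hx a ha
    have hmaps : Set.MapsTo (fun t => t * a) S S := by
      rintro t ⟨j, hj, a', ha', d, hd, rfl⟩
      exact ⟨j, hj, a' * a, hA_right _ ha' a, d * a, hA_right _ hd a, by
        simp only [add_mul, sub_mul, mul_assoc]⟩
    exact hmaps.closure (continuous_id.mul continuous_const) hx
  · -- essentiality
    intro z hz hz0
    by_cases hcase : ∃ c ∈ A, z * (c - e * c) ≠ 0
    · obtain ⟨c, hc, hne⟩ := hcase
      exact ⟨c - e * c, subset_closure ⟨0, hJ_zero, 0, hA_zero, c, hc, by simp⟩, hne⟩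
    · push_neg at hcase
      have hze : ∀ c ∈ A, z * c = z * (e * c) := by
        intro c hc
        have := hcase c hc
        rw [mul_sub, sub_eq_zero] at this
        exact this
      have hzA : star z ∈ A := hA_star z hz
      have hzzA : star z * z ∈ A := hA_right _ hzA z
      have hw_ne : e * (star z * z) * e ≠ 0 := by
        intro hw
        have hze0 : z * e = 0 := by
          have h1 : star (z * e) * (z * e) = 0 := by
            rw [star_mul, he_star]
            calc e * star z * (z * e) = e * (star z * z) * e := by
                  simp only [mul_assoc]
              _ = 0 := hw
          exact (CStarRing.star_mul_self_eq_zero_iff _).mp h1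
        apply hz0
        have h1 : z * star z = 0 := by
          have h2 := hze (star z) hzA
          rw [h2, ← mul_assoc, hze0, zero_mul]
        exact (CStarRing.mul_star_self_eq_zero_iff z).mp h1
      obtain ⟨x, hxJ, hx_ne⟩ := hJ_ess (e * (star z * z) * e) ⟨star z * z, hzzA, rfl⟩ hw_ne
      have hex : e * x = x := (hJ_e x hxJ).1
      have hxA : x ∈ A := hJ_A x hxJ
      have hzx : z * x ≠ 0 := by
        intro h0
        apply hx_ne
        calc e * (star z * z) * e * x = e * (star z * (z * (e * x))) := by
              simp only [mul_assoc]
          _ = e * (star z * (z * x)) := by rw [hex]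
          _ = 0 := by rw [h0, mul_zero, mul_zero]
      have hbb : (z * x) * star (z * x) ≠ 0 := fun h0 => hzx ((CStarRing.mul_star_self_eq_zero_iff _).mp h0)
      refine ⟨x * (star x * star z),
        subset_closure ⟨x, hxJ, star x * star z, hA_right _ (hA_star x hxA) (star z),
          0, hA_zero, by simp⟩, ?_⟩
      intro h0
      apply hbb
      calc (z * x) * star (z * x) = z * (x * (star x * star z)) := by
            rw [star_mul]
            simp only [mul_assoc]
        _ = 0 := by rw [h0]
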